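/- Let γ(t) = (β(t), α(t)) be a curve in the upper half-plane with β(t) → −∞ and α(t)²/β(t)² → c_γ, and fix s > 0. Let E, F ∈ ℝ⁴ with ch₀(E) = ch₀(F) = 0, ch₂(E) ≠ 0, and suppose F has ch₀(F) = ch₁(F) = 0, ch₂(F) ≠ 0 (F a torsion subsheaf class of dimension ≤ 1 with ch₂ ≠ 0, E of dimension 2, i.e., ch₁(E) ≠ 0). Then lim_{t→∞} (1/(−β(t)))·(λ_{γ(t),s}(E) − λ_{γ(t),s}(F)) = −((s + 1/6)c_γ + 1/2) < 0. In particular, for t large, λ_{γ(t),s}(F) > λ_{γ(t),s}(E), so any such subobject F destabilizes E asymptotically. -/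

import Mathlib

open Filter

/-- Along a curve with `β(t) → −∞`, `α(t)²/β(t)² → c_γ ≥ 0`, and for `s > 0`:
if `E ∈ ℝ⁴` has `ch₀(E) = 0`, `ch₁(E) ≠ 0` (dimension 2) and `F ∈ ℝ⁴` has
`ch₀(F) = ch₁(F) = 0`, `ch₂(F) ≠ 0` (dimension ≤ 1), then, with
`λ_{β,α,s}(v) = −Re Z_{β,α,s}(v)/Im Z_{β,α,s}(v)` (so
`λ(E) = (ch₃^β(E) − (s+1/6)α²ch₁(E))/(ch₂(E) − βch₁(E))` and
`λ(F) = (ch₃(F) − βch₂(F))/ch₂(F)`), one has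
`(1/(−β(t)))(λ(E) − λ(F)) → −((s + 1/6)c_γ + 1/2) < 0`; in particular
`λ(F) > λ(E)` for `t` large, so such a subobject `F` destabilizes `E` asymptotically. -/
theorem torsion_subobject_destabilizes_at_minus_infty
    (β α : ℝ → ℝ) (cγ s : ℝ) (hs : 0 < s)
    (hβ : Tendsto β atTop atBot)
    (hc : Tendsto (fun t => (α t) ^ 2 / (β t) ^ 2) atTop (nhds cγ))
    (hcγ : 0 ≤ cγ)
    (e₁ e₂ e₃ f₂ f₃ : ℝ) (he₁ : e₁ ≠ 0) (hf₂ : f₂ ≠ 0)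
    (hImE : ∀ᶠ t in atTop, 0 < e₂ - β t * e₁)
    (hImF : 0 < f₂)
    (lamE lamF : ℝ → ℝ)
    (hlamE : ∀ t, lamE t =
      ((e₃ - β t * e₂ + (1/2) * (β t) ^ 2 * e₁) - (s + 1/6) * (α t) ^ 2 * e₁) /
        (e₂ - β t * e₁))
    (hlamF : ∀ t, lamF t = (f₃ - β t * f₂) / f₂) :
    Tendsto (fun t => (1 / (-β t)) * (lamE t - lamF t)) atTop
        (nhds (-((s + 1/6) * cγ + 1/2))) ∧
      -((s + 1/6) * cγ + 1/2) < 0 ∧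
      ∀ᶠ t in atTop, lamE t < lamF t := by
  have hx : Tendsto (fun t => (β t)⁻¹) atTop (nhds 0) := by
    have h1 : Tendsto (fun t => -β t) atTop atTop := tendsto_neg_atBot_atTop.comp hβ
    have h2 := h1.inv_tendsto_atTop
    have h3 := h2.neg
    simpa [inv_neg] using h3
    
  -- auxiliary expression in terms of x = 1/β and r = α²/β²
  have hT : Tendsto (fun t =>
      (e₃ * ((β t)⁻¹) ^ 2 - e₂ * (β t)⁻¹ + (1/2) * e₁
        - (s + 1/6) * ((α t) ^ 2 / (β t) ^ 2) * e₁) / (e₁ - e₂ * (β t)⁻¹)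
      + f₃ * (β t)⁻¹ / f₂ - 1) atTop
      (nhds ((e₃ * (0:ℝ) ^ 2 - e₂ * 0 + (1/2) * e₁ - (s + 1/6) * cγ * e₁) / (e₁ - e₂ * 0)
        + f₃ * 0 / f₂ - 1)) := by
    apply Tendsto.sub_const
    apply Tendsto.add
    · apply Tendsto.div
      · exact (((tendsto_const_nhds.mul (hx.pow 2)).sub
          (tendsto_const_nhds.mul hx)).add_const _).sub
          ((tendsto_const_nhds.mul hc).mul_const _)
      · exact tendsto_const_nhds.sub (tendsto_const_nhds.mul hx)
      · simpa using he₁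
    · exact (tendsto_const_nhds.mul hx).div_const _
  have hval : (e₃ * (0:ℝ) ^ 2 - e₂ * 0 + (1/2) * e₁ - (s + 1/6) * cγ * e₁) / (e₁ - e₂ * 0)
      + f₃ * 0 / f₂ - 1 = -((s + 1/6) * cγ + 1/2) := by
    norm_num
    field_simp
    ring
  rw [hval] at hT
  have hev : ∀ᶠ t in atTop,
      (e₃ * ((β t)⁻¹) ^ 2 - e₂ * (β t)⁻¹ + (1/2) * e₁
        - (s + 1/6) * ((α t) ^ 2 / (β t) ^ 2) * e₁) / (e₁ - e₂ * (β t)⁻¹)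
      + f₃ * (β t)⁻¹ / f₂ - 1
      = (1 / (-β t)) * (lamE t - lamF t) := by
    filter_upwards [hβ.eventually_lt_atBot 0, hImE] with t hb hE
    have hb0 : β t ≠ 0 := ne_of_lt hb
    have hE0 : e₂ - β t * e₁ ≠ 0 := ne_of_gt hE
    have hden : e₁ - e₂ * (β t)⁻¹ ≠ 0 := by
      have : e₁ - e₂ * (β t)⁻¹ = -(e₂ - β t * e₁) / β t := by field_simp; ring
      rw [this]
      exact div_ne_zero (neg_ne_zero.mpr hE0) hb0
    have key : e₁ - e₂ * (β t)⁻¹ = -(e₂ - β t * e₁) / β t := by field_simp; ring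
    have h6 : β t * e₁ - e₂ ≠ 0 := by intro h; apply hE0; linarith
    rw [hlamE, hlamF, key]
    rw [div_div_eq_mul_div]
    field_simp
    ring
  have hmain : Tendsto (fun t => (1 / (-β t)) * (lamE t - lamF t)) atTop
      (nhds (-((s + 1/6) * cγ + 1/2))) := hT.congr' hev
  have hneg : -((s + 1/6) * cγ + 1/2) < 0 := by nlinarith
  refine ⟨hmain, hneg, ?_⟩
  filter_upwards [hmain.eventually_lt_const hneg, hβ.eventually_lt_atBot 0] with t h hb
  nlinarith [one_div_pos.mpr (neg_pos.mpr hb)]
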